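/- arXiv:2406.10131 — 2 statements merged into one kernel-verified Lean document; each statement's English description precedes it below -/
import Mathlib

section
/- Loewner sandwich between a block matrix and its block-diagonal part (Lemma D.6): Let V ∈ ℝ^{d₁×d₁} and W ∈ ℝ^{d₂×d₂} be symmetric positive definite and B ∈ ℝ^{d₁×d₂} satisfy ‖V^{−1/2} B W^{−1/2}‖ ≤ 1/2 in operator norm. Let M = [[V, B],[Bᵀ, W]] and U = blockdiag(V, W). Then (1/2)·U ≼ M ≼ 2·U in the Loewner (positive semidefinite) order. -/
open Matrix

noncomputable section

/-- Operator norm (largest singular value) of a real matrix. -/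
def opNorm {m n : Type*} [Fintype m] [Fintype n] [DecidableEq n] (A : Matrix m n ℝ) : ℝ :=
  ‖LinearMap.toContinuousLinearMap (Matrix.toEuclideanLin A)‖

/-- `invSqrt A` is `A^{-1/2}` for positive (semi)definite `A` (junk value `0` otherwise). -/
def invSqrt {n : Type*} [Fintype n] [DecidableEq n] (A : Matrix n n ℝ) : Matrix n n ℝ :=
  haveI := Classical.dec A.PosSemidef
  if h : A.PosSemidef then
    ((h.1.eigenvectorUnitary : Matrix n n ℝ) * diagonal ((↑) ∘ (√·) ∘ h.1.eigenvalues) *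
      (star h.1.eigenvectorUnitary : Matrix n n ℝ))⁻¹ else 0

lemma abs_dot_le {m n : Type*} [Fintype m] [Fintype n] [DecidableEq n]
    (A : Matrix m n ℝ) (a : m → ℝ) (b : n → ℝ) :
    |a ⬝ᵥ (A *ᵥ b)| ≤ opNorm A * Real.sqrt (a ⬝ᵥ a) * Real.sqrt (b ⬝ᵥ b) := by
  set ea : EuclideanSpace ℝ m := (WithLp.equiv 2 (m → ℝ)).symm a with hea
  set eb : EuclideanSpace ℝ n := (WithLp.equiv 2 (n → ℝ)).symm b with heb
  have h1 : a ⬝ᵥ (A *ᵥ b) = (inner ℝ ea (Matrix.toEuclideanLin A eb) : ℝ) := by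
    rw [hea, heb, WithLp.equiv_symm_apply, Matrix.toEuclideanLin_apply_piLp_toLp]
    simp [PiLp.inner_apply, dotProduct, PiLp.toLp_apply, RCLike.inner_apply, mul_comm]
  have h2 : Real.sqrt (a ⬝ᵥ a) = ‖ea‖ := by
    rw [EuclideanSpace.norm_eq]
    congr 1
    simp [dotProduct, hea, WithLp.equiv_symm_apply, PiLp.toLp_apply, Real.norm_eq_abs, sq_abs, sq]
  have h3 : Real.sqrt (b ⬝ᵥ b) = ‖eb‖ := by
    rw [EuclideanSpace.norm_eq]
    congr 1
    simp [dotProduct, heb, WithLp.equiv_symm_apply, PiLp.toLp_apply, Real.norm_eq_abs, sq_abs, sq]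
  rw [h1, h2, h3]
  calc |(inner ℝ ea (Matrix.toEuclideanLin A eb) : ℝ)| ≤ ‖ea‖ * ‖Matrix.toEuclideanLin A eb‖ :=
        abs_real_inner_le_norm _ _
    _ ≤ ‖ea‖ * (opNorm A * ‖eb‖) := by
        apply mul_le_mul_of_nonneg_left _ (norm_nonneg _)
        exact (LinearMap.toContinuousLinearMap (Matrix.toEuclideanLin A)).le_opNorm eb
    _ = opNorm A * ‖ea‖ * ‖eb‖ := by ring

lemma opNorm_nonneg' {m n : Type*} [Fintype m] [Fintype n] [DecidableEq n] (A : Matrix m n ℝ) :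
    0 ≤ opNorm A := norm_nonneg _

lemma opNorm_neg' {m n : Type*} [Fintype m] [Fintype n] [DecidableEq n] (A : Matrix m n ℝ) :
    opNorm (-A) = opNorm A := by
  unfold opNorm
  rw [map_neg, map_neg, norm_neg]

lemma block_psd {m n : Type*} [Fintype m] [Fintype n] [DecidableEq m] [DecidableEq n]
    (Z : Matrix m n ℝ) (c : ℝ) (hZ : opNorm Z ≤ c) :
    (Matrix.fromBlocks (c • (1 : Matrix m m ℝ)) Z Zᵀ (c • (1 : Matrix n n ℝ))).PosSemidef := by
  have hc : 0 ≤ c := le_trans (opNorm_nonneg' Z) hZ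
  refine posSemidef_iff_dotProduct_mulVec.mpr ⟨?_, ?_⟩
  · rw [Matrix.IsHermitian, Matrix.fromBlocks_conjTranspose]
    simp
  · intro x
    have hx : x = Sum.elim (x ∘ Sum.inl) (x ∘ Sum.inr) := by ext (i | j) <;> rfl
    set a : m → ℝ := x ∘ Sum.inl with ha
    set b : n → ℝ := x ∘ Sum.inr with hb
    have hda : (0:ℝ) ≤ a ⬝ᵥ a := Finset.sum_nonneg fun i _ => mul_self_nonneg _
    have hdb : (0:ℝ) ≤ b ⬝ᵥ b := Finset.sum_nonneg fun i _ => mul_self_nonneg _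
    set α := Real.sqrt (a ⬝ᵥ a) with hα
    set β := Real.sqrt (b ⬝ᵥ b) with hβ
    have hα2 : α ^ 2 = a ⬝ᵥ a := Real.sq_sqrt hda
    have hβ2 : β ^ 2 = b ⬝ᵥ b := Real.sq_sqrt hdb
    have hαn : 0 ≤ α := Real.sqrt_nonneg _
    have hβn : 0 ≤ β := Real.sqrt_nonneg _
    have ht : |a ⬝ᵥ (Z *ᵥ b)| ≤ c * α * β := by
      refine le_trans (abs_dot_le Z a b) ?_
      have := mul_le_mul_of_nonneg_right (mul_le_mul_of_nonneg_right hZ hαn) hβn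
      linarith
    have hT : b ⬝ᵥ (Zᵀ *ᵥ a) = a ⬝ᵥ (Z *ᵥ b) := by
      rw [Matrix.dotProduct_mulVec, Matrix.vecMul_transpose, dotProduct_comm]
    have key : star x ⬝ᵥ (Matrix.fromBlocks (c • (1 : Matrix m m ℝ)) Z Zᵀ
        (c • (1 : Matrix n n ℝ)) *ᵥ x) =
        c * (a ⬝ᵥ a) + (a ⬝ᵥ (Z *ᵥ b) + (b ⬝ᵥ (Zᵀ *ᵥ a) + c * (b ⬝ᵥ b))) := by
      rw [star_trivial, Matrix.fromBlocks_mulVec]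
      conv_lhs => rw [hx]
      rw [sumElim_dotProduct_sumElim]
      simp [← ha, ← hb, Matrix.smul_mulVec, Matrix.one_mulVec, dotProduct_add,
        dotProduct_smul, smul_eq_mul, add_assoc]
    rw [key, ← hα2, ← hβ2]
    have habs := abs_le.mp ht
    nlinarith [sq_nonneg (α - β), habs.1, habs.2]

/-- **Loewner sandwich between a block matrix and its block-diagonal part (Lemma D.6).**
If `‖V^{-1/2} B W^{-1/2}‖ ≤ 1/2`, then `(1/2)U ≼ M ≼ 2U`, where `M = [[V,B],[Bᵀ,W]]` and
`U = blockdiag(V,W)`.  `A ≼ B` is expressed as `(B − A).PosSemidef`. -/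
theorem loewner_sandwich_block_diagonal
    {d₁ d₂ : ℕ}
    (V : Matrix (Fin d₁) (Fin d₁) ℝ) (W : Matrix (Fin d₂) (Fin d₂) ℝ)
    (B : Matrix (Fin d₁) (Fin d₂) ℝ)
    (hV : V.PosDef) (hW : W.PosDef)
    (hZ : opNorm (invSqrt V * B * invSqrt W) ≤ 1 / 2) :
    (Matrix.fromBlocks V B Bᵀ W - (1 / 2 : ℝ) • Matrix.fromBlocks V 0 0 W).PosSemidef ∧
    ((2 : ℝ) • Matrix.fromBlocks V 0 0 W - Matrix.fromBlocks V B Bᵀ W).PosSemidef := by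
  set Z := invSqrt V * B * invSqrt W with hZdef
  set S := ((hV.posSemidef.1.eigenvectorUnitary : Matrix (Fin d₁) (Fin d₁) ℝ) *
    diagonal ((↑) ∘ (√·) ∘ hV.posSemidef.1.eigenvalues) *
      (star hV.posSemidef.1.eigenvectorUnitary : Matrix (Fin d₁) (Fin d₁) ℝ)) with hSdef
  set T := ((hW.posSemidef.1.eigenvectorUnitary : Matrix (Fin d₂) (Fin d₂) ℝ) *
    diagonal ((↑) ∘ (√·) ∘ hW.posSemidef.1.eigenvalues) *
      (star hW.posSemidef.1.eigenvectorUnitary : Matrix (Fin d₂) (Fin d₂) ℝ)) with hTdef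
  have hS : S.IsHermitian := by
    rw [hSdef, Matrix.star_eq_conjTranspose]
    exact isHermitian_mul_mul_conjTranspose _ (isHermitian_diagonal _)
  have hT : T.IsHermitian := by
    rw [hTdef, Matrix.star_eq_conjTranspose]
    exact isHermitian_mul_mul_conjTranspose _ (isHermitian_diagonal _)
  have hSS : S * S = V := by
    conv_rhs => rw [hV.posSemidef.1.spectral_theorem]
    rw [hSdef, Unitary.conjStarAlgAut_apply]
    simp only [Matrix.mul_assoc]
    rw [← Matrix.mul_assoc (star _ : Matrix _ _ ℝ) (_ : Matrix _ _ ℝ), Unitary.coe_star_mul_self,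
      Matrix.one_mul, ← Matrix.mul_assoc (diagonal _), diagonal_mul_diagonal]
    congr 3
    ext i
    simp [Real.mul_self_sqrt (hV.posSemidef.eigenvalues_nonneg i)]
  have hTT : T * T = W := by
    conv_rhs => rw [hW.posSemidef.1.spectral_theorem]
    rw [hTdef, Unitary.conjStarAlgAut_apply]
    simp only [Matrix.mul_assoc]
    rw [← Matrix.mul_assoc (star _ : Matrix _ _ ℝ) (_ : Matrix _ _ ℝ), Unitary.coe_star_mul_self,
      Matrix.one_mul, ← Matrix.mul_assoc (diagonal _), diagonal_mul_diagonal]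
    congr 3
    ext i
    simp [Real.mul_self_sqrt (hW.posSemidef.eigenvalues_nonneg i)]
  have hSdetu : IsUnit S.det := by
    rw [isUnit_iff_ne_zero]
    intro h
    have h2 : S.det * S.det = V.det := by rw [← Matrix.det_mul, hSS]
    have := hV.det_pos
    rw [h, mul_zero] at h2
    linarith
  have hTdetu : IsUnit T.det := by
    rw [isUnit_iff_ne_zero]
    intro h
    have h2 : T.det * T.det = W.det := by rw [← Matrix.det_mul, hTT]
    have := hW.det_pos
    rw [h, mul_zero] at h2
    linarith
  have hSinv : S * S⁻¹ = 1 := Matrix.mul_nonsing_inv _ hSdetu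
  have hTinv : T⁻¹ * T = 1 := Matrix.nonsing_inv_mul _ hTdetu
  have hiV : invSqrt V = S⁻¹ := by rw [invSqrt, dif_pos hV.posSemidef]
  have hiW : invSqrt W = T⁻¹ := by rw [invSqrt, dif_pos hW.posSemidef]
  have hB : S * Z * T = B := by
    rw [hZdef, hiV, hiW]
    simp only [Matrix.mul_assoc]
    rw [hTinv, Matrix.mul_one, ← Matrix.mul_assoc, hSinv, Matrix.one_mul]
  have hSt : Sᵀ = S := hS
  have hTt : Tᵀ = T := hT
  clear_value Z S T
  have hBt : T * Zᵀ * S = Bᵀ := by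
    rw [← hB]
    rw [Matrix.transpose_mul, Matrix.transpose_mul, hSt, hTt, Matrix.mul_assoc]
  set C : Matrix (Fin d₁ ⊕ Fin d₂) (Fin d₁ ⊕ Fin d₂) ℝ := Matrix.fromBlocks S 0 0 T with hCdef
  have hCH : Cᴴ = C := by
    rw [hCdef, Matrix.fromBlocks_conjTranspose]
    congr 1 <;> simp
  constructor
  · have hN := (block_psd Z (1/2 : ℝ) hZ).mul_mul_conjTranspose_same C
    have e2 : C * Matrix.fromBlocks ((1/2:ℝ) • 1) Z Zᵀ ((1/2:ℝ) • 1) * Cᴴ =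
        Matrix.fromBlocks V B Bᵀ W - (1 / 2 : ℝ) • Matrix.fromBlocks V 0 0 W := by
      rw [hCH, hCdef, Matrix.fromBlocks_multiply, Matrix.fromBlocks_multiply]
      simp only [Matrix.mul_zero, Matrix.zero_mul, add_zero, zero_add, Matrix.mul_smul,
        Matrix.mul_one, Matrix.smul_mul, smul_zero, neg_zero]
      rw [hSS, hTT, hB, hBt]
      ext (i | j) (k | l) <;>
        simp [Matrix.fromBlocks, Matrix.sub_apply, Matrix.smul_apply] <;> ring
    rw [← e2]
    exact hN
  · have hZ' : opNorm (-Z) ≤ 1 := by rw [opNorm_neg']; linarith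
    have hN := (block_psd (-Z) (1 : ℝ) hZ').mul_mul_conjTranspose_same C
    have e2 : C * Matrix.fromBlocks ((1:ℝ) • 1) (-Z) (-Z)ᵀ ((1:ℝ) • 1) * Cᴴ =
        (2 : ℝ) • Matrix.fromBlocks V 0 0 W - Matrix.fromBlocks V B Bᵀ W := by
      rw [hCH, hCdef, Matrix.fromBlocks_multiply, Matrix.fromBlocks_multiply]
      simp only [Matrix.mul_zero, Matrix.zero_mul, add_zero, zero_add, Matrix.mul_smul,
        Matrix.mul_one, Matrix.smul_mul, one_smul, Matrix.transpose_neg, Matrix.mul_neg,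
        Matrix.neg_mul, smul_zero, neg_zero]
      rw [hSS, hTT, hB, hBt]
      ext (i | j) (k | l) <;>
        simp [Matrix.fromBlocks, Matrix.sub_apply, Matrix.smul_apply] <;> ring
    rw [← e2]
    exact hN
end
end

section
/- Refined instantaneous regret bound via the block-diagonal matrix (Lemma B.4 core): Let x̃_i = P(i, x_i, z_i) ∈ ℝ^{d₁+d₂K} for i ∈ {1,…,K} be sparse embeddings of vectors x_i ∈ ℝ^{d₁}, z_i ∈ ℝ^{d₂}. Let M ∈ ℝ^{(d₁+d₂K)×(d₁+d₂K)} be symmetric positive definite and U = blockdiag(V, W₁, …, W_K) with V ∈ ℝ^{d₁×d₁} and each W_i ∈ ℝ^{d₂×d₂} symmetric positive definite, and assume M ≽ (1/2)·U in the Loewner order. Let φ̂, φ* ∈ ℝ^{d₁+d₂K}, γ ≥ 0, assume |⟨x̃_i, φ̂ − φ*⟩| ≤ γ·‖x̃_i‖_{M^{−1}} for every i, and let i_t maximize i ↦ ⟨x̃_i, φ̂⟩ + γ·‖x̃_i‖_{M^{−1}}. Then max_j ⟨x̃_j, φ*⟩ − ⟨x̃_{i_t}, φ*⟩ ≤ √8·γ·(‖x_{i_t}‖_{V^{−1}}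 + ‖z_{i_t}‖_{W_{i_t}^{−1}}). -/
open Matrix

noncomputable section

/-- Index type for the hybrid feature space `ℝ^{d₁+d₂K}`: the first `d₁` coordinates
followed by `K` blocks of `d₂` coordinates (block `i` holding arm `i`'s disjoint part). -/
abbrev HybIdx (d₁ d₂ K : ℕ) := Fin d₁ ⊕ Fin d₂ × Fin K

/-- The sparse embedding `P(i, x, z) ∈ ℝ^{d₁+d₂K}`: `x` in the first `d₁` coordinates,
`z` in the `i`-th block of `d₂` coordinates, and zeros elsewhere. -/
def embed {d₁ d₂ K : ℕ} (i : Fin K) (x : Fin d₁ → ℝ) (z : Fin d₂ → ℝ) :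
    HybIdx d₁ d₂ K → ℝ :=
  Sum.elim x (fun p => if p.2 = i then z p.1 else 0)

/-- The matrix-weighted norm `‖v‖_A = √(vᵀ A v)`. -/
def matNorm {n : Type*} [Fintype n] (A : Matrix n n ℝ) (v : n → ℝ) : ℝ :=
  Real.sqrt (v ⬝ᵥ A.mulVec v)

/-- `blockdiag(V, W₁, …, W_K)` on the hybrid index set. -/
def hybBlockDiag {d₁ d₂ K : ℕ} (V : Matrix (Fin d₁) (Fin d₁) ℝ)
    (W : Fin K → Matrix (Fin d₂) (Fin d₂) ℝ) :
    Matrix (HybIdx d₁ d₂ K) (HybIdx d₁ d₂ K) ℝ :=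
  Matrix.fromBlocks V 0 0 (Matrix.blockDiagonal W)

theorem psd_quad_nonneg {n : Type*} [Fintype n] {A : Matrix n n ℝ} (h : A.PosSemidef)
    (v : n → ℝ) : 0 ≤ v ⬝ᵥ A.mulVec v := by
  simpa using h.dotProduct_mulVec_nonneg v

theorem quad_inv_le {n : Type*} [Fintype n] [DecidableEq n]
    {A B : Matrix n n ℝ} (hA : A.PosDef) (hB : B.PosDef)
    (h : (B - (1/2 : ℝ) • A).PosSemidef) (v : n → ℝ) :
    v ⬝ᵥ B⁻¹.mulVec v ≤ 2 * (v ⬝ᵥ A⁻¹.mulVec v) := by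
  set w := B⁻¹.mulVec v with hw
  have hBw : B.mulVec w = v := by
    rw [hw, mulVec_mulVec, Matrix.mul_nonsing_inv _ (isUnit_iff_isUnit_det _ |>.1 hB.isUnit), one_mulVec]
  have hwBw : w ⬝ᵥ B.mulVec w = v ⬝ᵥ w := by
    rw [hBw, dotProduct_comm]
  have h1 : 0 ≤ w ⬝ᵥ B.mulVec w - (1/2) * (w ⬝ᵥ A.mulVec w) := by
    have := h.dotProduct_mulVec_nonneg w
    simpa [sub_mulVec, dotProduct_sub, smul_mulVec, dotProduct_smul, smul_eq_mul] using this
  set u := w - (2 : ℝ) • A⁻¹.mulVec v with hu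
  have h2 : 0 ≤ u ⬝ᵥ A.mulVec u := by simpa using hA.posSemidef.dotProduct_mulVec_nonneg u
  have hAinv : A.mulVec (A⁻¹.mulVec v) = v := by
    rw [mulVec_mulVec, Matrix.mul_nonsing_inv _ (isUnit_iff_isUnit_det _ |>.1 hA.isUnit), one_mulVec]
  have hsymmA : Aᵀ = A := by
    have := hA.isHermitian.eq
    ext i j
    exact congrFun (congrFun this i) j
  have hvAw : (A⁻¹.mulVec v) ⬝ᵥ A.mulVec w = v ⬝ᵥ w := by
    rw [dotProduct_mulVec, ← mulVec_transpose, hsymmA, hAinv]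
  have hvAv : (A⁻¹.mulVec v) ⬝ᵥ A.mulVec (A⁻¹.mulVec v) = v ⬝ᵥ A⁻¹.mulVec v := by
    rw [hAinv, dotProduct_comm]
  have hwv : w ⬝ᵥ v = v ⬝ᵥ w := dotProduct_comm _ _
  have hexp : u ⬝ᵥ A.mulVec u
      = w ⬝ᵥ A.mulVec w - 4 * (v ⬝ᵥ w) + 4 * (v ⬝ᵥ A⁻¹.mulVec v) := by
    have hcomm : (A⁻¹.mulVec v) ⬝ᵥ v = v ⬝ᵥ A⁻¹.mulVec v := dotProduct_comm _ _
    rw [hu]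
    simp only [mulVec_sub, mulVec_smul, dotProduct_sub, sub_dotProduct, dotProduct_smul,
      smul_dotProduct, smul_eq_mul, hAinv, hvAw, hvAv, hwv, hcomm]
    ring
  nlinarith [h1, h2, hexp, hwBw]

theorem blockDiag_quad {d₂ K : ℕ} (W : Fin K → Matrix (Fin d₂) (Fin d₂) ℝ)
    (b : Fin d₂ × Fin K → ℝ) :
    b ⬝ᵥ (Matrix.blockDiagonal W).mulVec b
      = ∑ k, (fun p => b (p, k)) ⬝ᵥ (W k).mulVec (fun p => b (p, k)) := by
  simp only [dotProduct, mulVec, blockDiagonal_apply, Fintype.sum_prod_type, ite_mul, zero_mul,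
    mul_ite, mul_zero]
  rw [Finset.sum_comm]
  refine Finset.sum_congr rfl fun k _ => Finset.sum_congr rfl fun p _ => ?_
  congr 1
  rw [Finset.sum_comm]
  simp

theorem hyb_quad {d₁ d₂ K : ℕ} (V : Matrix (Fin d₁) (Fin d₁) ℝ)
    (W : Fin K → Matrix (Fin d₂) (Fin d₂) ℝ) (i : Fin K) (x : Fin d₁ → ℝ) (z : Fin d₂ → ℝ) :
    embed i x z ⬝ᵥ (hybBlockDiag V W).mulVec (embed i x z)
      = x ⬝ᵥ V.mulVec x + z ⬝ᵥ (W i).mulVec z := by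
  rw [embed, hybBlockDiag, fromBlocks_mulVec, sumElim_dotProduct_sumElim]
  simp only [Sum.elim_comp_inl, Sum.elim_comp_inr]
  congr 1
  · simp
  · rw [show (fun p : Fin d₂ × Fin K => if p.2 = i then z p.1 else 0)
        = fun p => if p.2 = i then z p.1 else 0 from rfl]
    simp only [zero_mulVec, zero_add]
    rw [blockDiag_quad]
    have : ∀ k : Fin K, (fun p => if (⟨p, k⟩ : Fin d₂ × Fin K).2 = i then z p else 0)
        ⬝ᵥ (W k).mulVec (fun p => if (⟨p, k⟩ : Fin d₂ × Fin K).2 = i then z p else 0)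
        = if k = i then z ⬝ᵥ (W i).mulVec z else 0 := by
      intro k
      by_cases hk : k = i <;> simp [hk]
    simp only [this]
    simp

theorem hyb_mul_inv {d₁ d₂ K : ℕ} {V : Matrix (Fin d₁) (Fin d₁) ℝ} (hV : V.PosDef)
    {W : Fin K → Matrix (Fin d₂) (Fin d₂) ℝ} (hW : ∀ i, (W i).PosDef) :
    (hybBlockDiag V W)⁻¹ = hybBlockDiag V⁻¹ (fun i => (W i)⁻¹) := by
  apply inv_eq_right_inv
  rw [hybBlockDiag, hybBlockDiag, fromBlocks_multiply]
  simp only [Matrix.mul_zero, Matrix.zero_mul, add_zero, zero_add]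
  rw [← blockDiagonal_mul, Matrix.mul_nonsing_inv _ (isUnit_iff_isUnit_det _ |>.1 hV.isUnit)]
  have : ∀ i, W i * (W i)⁻¹ = 1 := fun i =>
    Matrix.mul_nonsing_inv _ (isUnit_iff_isUnit_det _ |>.1 (hW i).isUnit)
  simp only [this]
  rw [show (fun _ : Fin K => (1 : Matrix (Fin d₂) (Fin d₂) ℝ)) = 1 from rfl,
    blockDiagonal_one, fromBlocks_one]

theorem hyb_posdef {d₁ d₂ K : ℕ} {V : Matrix (Fin d₁) (Fin d₁) ℝ} (hV : V.PosDef)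
    {W : Fin K → Matrix (Fin d₂) (Fin d₂) ℝ} (hW : ∀ i, (W i).PosDef) :
    (hybBlockDiag V W).PosDef := by
  rw [posDef_iff_dotProduct_mulVec]
  constructor
  · rw [hybBlockDiag, isHermitian_fromBlocks_iff]
    refine ⟨hV.isHermitian, by simp, by simp, ?_⟩
    rw [Matrix.IsHermitian]
    ext ⟨p, k⟩ ⟨q, l⟩
    simp only [conjTranspose_apply, blockDiagonal_apply, star_trivial]
    by_cases h : l = k
    · subst h
      have := congrFun (congrFun (hW l).isHermitian.eq q) p
      simp only [conjTranspose_apply, star_trivial] at this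
      simp [this]
    · simp [h, Ne.symm h]
  · intro v hv
    set a := v ∘ Sum.inl with ha
    set b := v ∘ Sum.inr with hb
    have hvd : v = Sum.elim a b := by
      funext j; cases j <;> rfl
    have hquad : v ⬝ᵥ (hybBlockDiag V W).mulVec v
        = a ⬝ᵥ V.mulVec a + b ⬝ᵥ (Matrix.blockDiagonal W).mulVec b := by
      rw [hvd, hybBlockDiag, fromBlocks_mulVec, sumElim_dotProduct_sumElim]
      simp [Sum.elim_comp_inl, Sum.elim_comp_inr]
    have haV : 0 ≤ a ⬝ᵥ V.mulVec a := psd_quad_nonneg hV.posSemidef a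
    have hslice : ∀ k : Fin K, 0 ≤ (fun p => b (p, k)) ⬝ᵥ (W k).mulVec (fun p => b (p, k)) :=
      fun k => psd_quad_nonneg (hW k).posSemidef _
    have hbD : 0 ≤ b ⬝ᵥ (Matrix.blockDiagonal W).mulVec b := by
      rw [blockDiag_quad]
      exact Finset.sum_nonneg fun k _ => hslice k
    have hne : a ≠ 0 ∨ b ≠ 0 := by
      by_contra hcon
      push_neg at hcon
      apply hv
      funext j
      cases j with
      | inl i => exact congrFun hcon.1 i
      | inr p => exact congrFun hcon.2 p
    have hpos : 0 < v ⬝ᵥ (hybBlockDiag V W).mulVec v := by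
      rcases hne with hne | hne
      · have : 0 < a ⬝ᵥ V.mulVec a := by simpa using hV.dotProduct_mulVec_pos hne
        rw [hquad]; linarith
      · obtain ⟨⟨p, k⟩, hpk⟩ := Function.ne_iff.1 hne
        have hbk : (fun p => b (p, k)) ≠ 0 := fun hz => hpk (congrFun hz p)
        have hk : 0 < (fun p => b (p, k)) ⬝ᵥ (W k).mulVec (fun p => b (p, k)) := by
          simpa using (hW k).dotProduct_mulVec_pos hbk
        have : 0 < b ⬝ᵥ (Matrix.blockDiagonal W).mulVec b := by
          rw [blockDiag_quad]
          exact Finset.sum_pos' (fun j _ => hslice j) ⟨k, Finset.mem_univ _, hk⟩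
        rw [hquad]; linarith
    simpa [show star v = v from star_trivial v] using hpos

/-- **Refined instantaneous regret bound via the block-diagonal matrix (Lemma B.4 core).**
If `M ≽ (1/2)·blockdiag(V, W₁, …, W_K)`, the per-arm estimation errors are bounded by
`γ‖x̃_i‖_{M⁻¹}` and `i_t` maximizes the UCB index, then the instantaneous regret is at most
`√8·γ·(‖x_{i_t}‖_{V⁻¹} + ‖z_{i_t}‖_{W_{i_t}⁻¹})`. -/
theorem refined_instantaneous_regret_block_diagonal
    {d₁ d₂ K : ℕ} (hK : 1 ≤ K)
    (x : Fin K → Fin d₁ → ℝ) (z : Fin K → Fin d₂ → ℝ)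
    (M : Matrix (HybIdx d₁ d₂ K) (HybIdx d₁ d₂ K) ℝ) (hM : M.PosDef)
    (V : Matrix (Fin d₁) (Fin d₁) ℝ) (hV : V.PosDef)
    (W : Fin K → Matrix (Fin d₂) (Fin d₂) ℝ) (hW : ∀ i, (W i).PosDef)
    (hMU : (M - (1 / 2 : ℝ) • hybBlockDiag V W).PosSemidef)
    (phiHat phiStar : HybIdx d₁ d₂ K → ℝ) (γ : ℝ) (hγ : 0 ≤ γ)
    (hconf : ∀ i : Fin K,
      |embed i (x i) (z i) ⬝ᵥ (phiHat - phiStar)| ≤ γ * matNorm M⁻¹ (embed i (x i) (z i)))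
    (it : Fin K)
    (hit : ∀ i : Fin K,
      embed i (x i) (z i) ⬝ᵥ phiHat + γ * matNorm M⁻¹ (embed i (x i) (z i))
        ≤ embed it (x it) (z it) ⬝ᵥ phiHat + γ * matNorm M⁻¹ (embed it (x it) (z it))) :
    (⨆ j : Fin K, embed j (x j) (z j) ⬝ᵥ phiStar) - embed it (x it) (z it) ⬝ᵥ phiStar
      ≤ Real.sqrt 8 * γ * (matNorm V⁻¹ (x it) + matNorm (W it)⁻¹ (z it)) := by
  haveI : Nonempty (Fin K) := ⟨⟨0, hK⟩⟩
  set U := hybBlockDiag V W with hUdef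
  have hU : U.PosDef := hyb_posdef hV hW
  set v := embed it (x it) (z it) with hvdef
  have hq : v ⬝ᵥ M⁻¹.mulVec v ≤ 2 * (v ⬝ᵥ U⁻¹.mulVec v) := quad_inv_le hU hM hMU v
  have hUinv : U⁻¹ = hybBlockDiag V⁻¹ (fun i => (W i)⁻¹) := hyb_mul_inv hV hW
  have hquad : v ⬝ᵥ U⁻¹.mulVec v
      = x it ⬝ᵥ V⁻¹.mulVec (x it) + z it ⬝ᵥ (W it)⁻¹.mulVec (z it) := by
    rw [hUinv, hvdef]; exact hyb_quad _ _ _ _ _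
  set a := matNorm V⁻¹ (x it) with hadef
  set b := matNorm (W it)⁻¹ (z it) with hbdef
  have ha0 : 0 ≤ a := Real.sqrt_nonneg _
  have hb0 : 0 ≤ b := Real.sqrt_nonneg _
  have ha2 : a ^ 2 = x it ⬝ᵥ V⁻¹.mulVec (x it) := by
    rw [hadef, matNorm, Real.sq_sqrt (psd_quad_nonneg hV.inv.posSemidef _)]
  have hb2 : b ^ 2 = z it ⬝ᵥ (W it)⁻¹.mulVec (z it) := by
    rw [hbdef, matNorm, Real.sq_sqrt (psd_quad_nonneg (hW it).inv.posSemidef _)]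
  have hnorm : matNorm M⁻¹ v ≤ Real.sqrt 2 * (a + b) := by
    rw [matNorm]
    have h1 : v ⬝ᵥ M⁻¹.mulVec v ≤ 2 * (a + b) ^ 2 := by nlinarith [hq, hquad, ha2, hb2]
    calc Real.sqrt (v ⬝ᵥ M⁻¹.mulVec v) ≤ Real.sqrt (2 * (a + b) ^ 2) := Real.sqrt_le_sqrt h1
      _ = Real.sqrt 2 * (a + b) := by
          rw [Real.sqrt_mul (by norm_num), Real.sqrt_sq (by positivity)]
  have hreg : ∀ j : Fin K,
      embed j (x j) (z j) ⬝ᵥ phiStar ≤ v ⬝ᵥ phiStar + 2 * γ * matNorm M⁻¹ v := by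
    intro j
    have h1 := abs_le.1 (hconf j)
    have h2 := abs_le.1 (hconf it)
    have h3 := hit j
    rw [dotProduct_sub] at h1 h2
    linarith [h1.1, h1.2, h2.1, h2.2, h3]
  have hsup : (⨆ j : Fin K, embed j (x j) (z j) ⬝ᵥ phiStar)
      ≤ v ⬝ᵥ phiStar + 2 * γ * matNorm M⁻¹ v := ciSup_le hreg
  have h8 : Real.sqrt 8 = 2 * Real.sqrt 2 := by
    rw [show (8:ℝ) = 2^2*2 by norm_num, Real.sqrt_mul (by positivity), Real.sqrt_sq (by norm_num)]
  have hfin : 2 * γ * matNorm M⁻¹ v ≤ Real.sqrt 8 * γ * (a + b) := by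
    rw [h8]
    nlinarith [mul_le_mul_of_nonneg_left hnorm hγ]
  linarith
end
end
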